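/- Let T be a linear operator on M_{m×n}(S) that preserves the rank of every rank-1 matrix, and suppose there exist permutations ρ of {1,…,m} and σ of {1,…,n} and units α_{ij} of S with T(E_{ij}) = α_{ij} E_{ρ(i),σ(j)} for all (i,j) (or m = n and T(E_{ij}) = α_{ij} E_{σ(j),ρ(i)} for all (i,j)). Then T is a (U,V) operator: in the first case there exist invertible matrices U (m×m) and V (n×n) over S, namely a permutation matrix times an invertible diagonal matrix on each side, such that T(A) = U·A·V for every A ∈ M_{m×n}(S); in the second case m = n and there exist invertible matrices U, V with T(A) = U·Aᵗ·V for every A. -/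

import Mathlib

open scoped Classical

/-- The semiring rank of an `m × n` matrix over `S`: the least positive `k` such that
`A = B * C` for some `m × k` matrix `B` and `k × n` matrix `C`; the rank of `0` is `0`. -/
noncomputable def matRank {S : Type*} [CommSemiring S] {m n : ℕ}
    (A : Matrix (Fin m) (Fin n) S) : ℕ :=
  if A = 0 then 0
  else sInf {k : ℕ | 0 < k ∧
    ∃ (B : Matrix (Fin m) (Fin k) S) (C : Matrix (Fin k) (Fin n) S), A = B * C}

/-- The transpose of an `m × n` matrix, recast (via `m = n`) as an `m × n` matrix. -/
def trCast {S : Type*} {m n : ℕ} (h : m = n) (A : Matrix (Fin m) (Fin n) S) :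
    Matrix (Fin m) (Fin n) S :=
  Matrix.of fun i j => A (Fin.cast h.symm j) (Fin.cast h i)

/-- `T` is a `(U,V)` operator: either `T A = U * A * V` for some invertible `U`, `V`, or
`m = n` and `T A = U * Aᵗ * V` for some invertible `U`, `V`. -/
def IsUVOperator {S : Type*} [CommSemiring S] {m n : ℕ}
    (T : Matrix (Fin m) (Fin n) S →ₗ[S] Matrix (Fin m) (Fin n) S) : Prop :=
  (∃ (U : Matrix (Fin m) (Fin m) S) (V : Matrix (Fin n) (Fin n) S),
    IsUnit U ∧ IsUnit V ∧ ∀ A, T A = U * A * V) ∨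
  (∃ h : m = n, ∃ (U : Matrix (Fin m) (Fin m) S) (V : Matrix (Fin n) (Fin n) S),
    IsUnit U ∧ IsUnit V ∧ ∀ A, T A = U * trCast h A * V)

open Matrix


section aux
variable {S : Type*} [CommSemiring S]

/-- column-form generalized permutation matrix: column `i` has entry `w i` at row `e i`. -/
def pmMat {k : ℕ} (e : Equiv.Perm (Fin k)) (w : Fin k → S) : Matrix (Fin k) (Fin k) S :=
  Matrix.of fun p i => if p = e i then w i else 0

/-- row-form generalized permutation matrix: row `i` has entry `w i` at column `e i`. -/
def qmMat {k : ℕ} (e : Equiv.Perm (Fin k)) (w : Fin k → S) : Matrix (Fin k) (Fin k) S :=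
  Matrix.of fun i p => if p = e i then w i else 0

lemma pm_mul_qm {k : ℕ} (e : Equiv.Perm (Fin k)) (w w' : Fin k → S)
    (h : ∀ i, w i * w' i = 1) : pmMat e w * qmMat e w' = 1 := by
  ext p q
  rw [Matrix.mul_apply, Finset.sum_eq_single (e.symm p)]
  · simp [pmMat, qmMat, Matrix.one_apply, h, eq_comm]
  · intro b _ hb
    have : p ≠ e b := fun hc => hb (by simp [hc])
    simp [pmMat, qmMat, this]
  · simp

lemma qm_mul_pm {k : ℕ} (e : Equiv.Perm (Fin k)) (w w' : Fin k → S)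
    (h : ∀ i, w i * w' i = 1) : qmMat e w * pmMat e w' = 1 := by
  ext i i'
  rw [Matrix.mul_apply, Finset.sum_eq_single (e i)]
  · by_cases hii : i = i'
    · subst hii; simp [pmMat, qmMat, Matrix.one_apply, h]
    · have : e i ≠ e i' := fun hc => hii (e.injective hc)
      simp [pmMat, qmMat, Matrix.one_apply, this, hii]
  · intro b _ hb
    simp [pmMat, qmMat, hb]
  · simp

lemma isUnit_pmMat {k : ℕ} (e : Equiv.Perm (Fin k)) (w : Fin k → S)
    (hw : ∀ i, IsUnit (w i)) : IsUnit (pmMat e w) :=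
  ⟨⟨_, qmMat e (fun i => ((hw i).unit⁻¹ : Sˣ)),
    pm_mul_qm e _ _ (fun i => (hw i).mul_val_inv),
    qm_mul_pm e _ _ (fun i => (hw i).val_inv_mul)⟩, rfl⟩

lemma isUnit_qmMat {k : ℕ} (e : Equiv.Perm (Fin k)) (w : Fin k → S)
    (hw : ∀ i, IsUnit (w i)) : IsUnit (qmMat e w) :=
  ⟨⟨_, pmMat e (fun i => ((hw i).unit⁻¹ : Sˣ)),
    qm_mul_pm e _ _ (fun i => (hw i).mul_val_inv),
    pm_mul_qm e _ _ (fun i => (hw i).val_inv_mul)⟩, rfl⟩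

lemma triple_apply {k l : ℕ} (π : Equiv.Perm (Fin k)) (τ : Equiv.Perm (Fin l))
    (wU : Fin k → S) (wV : Fin l → S) (M : Matrix (Fin k) (Fin l) S) (p : Fin k) (q : Fin l) :
    (pmMat π wU * M * qmMat τ wV) p q
      = wU (π.symm p) * M (π.symm p) (τ.symm q) * wV (τ.symm q) := by
  have h1 : ∀ j, (pmMat π wU * M) p j = wU (π.symm p) * M (π.symm p) j := by
    intro j
    rw [Matrix.mul_apply, Finset.sum_eq_single (π.symm p)]
    · simp [pmMat]
    · intro b _ hb
      have : p ≠ π b := fun hc => hb (by simp [hc])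
      simp [pmMat, this]
    · simp
  rw [Matrix.mul_apply, Finset.sum_eq_single (τ.symm q)]
  · rw [h1]; simp [qmMat]
  · intro b _ hb
    have : q ≠ τ b := fun hc => hb (by simp [hc])
    simp [qmMat, this]
  · simp

end aux

section rank
variable {S : Type*} [CommSemiring S] {m n : ℕ}

/-- From `matRank A = 1` extract a rank-one factorization. -/
lemma exists_factor_of_matRank_one {A : Matrix (Fin m) (Fin n) S} (h : matRank A = 1) :
    ∃ (B : Matrix (Fin m) (Fin 1) S) (C : Matrix (Fin 1) (Fin n) S), A = B * C := by
  by_cases hA : A = 0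
  · simp [matRank, hA] at h
  · rw [matRank, if_neg hA] at h
    have hne : {k : ℕ | 0 < k ∧
        ∃ (B : Matrix (Fin m) (Fin k) S) (C : Matrix (Fin k) (Fin n) S), A = B * C}.Nonempty := by
      by_contra hc
      rw [Set.not_nonempty_iff_eq_empty] at hc
      rw [hc, Nat.sInf_empty] at h
      exact one_ne_zero h.symm
    have := Nat.sInf_mem hne
    rw [h] at this
    exact this.2

/-- The key 2×2 relation: if the 4-corner matrix has rank one then `a*d = b*c`. -/
lemma four_corner_rel {p1 p2 : Fin m} {q1 q2 : Fin n} (hp : p1 ≠ p2) (hq : q1 ≠ q2)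
    {a b c d : S}
    (hr : matRank (a • Matrix.single p1 q1 (1:S) + b • Matrix.single p1 q2 1
      + c • Matrix.single p2 q1 1 + d • Matrix.single p2 q2 1) = 1) :
    a * d = b * c := by
  obtain ⟨B, C, hBC⟩ := exists_factor_of_matRank_one hr
  have entry : ∀ p q, (a • Matrix.single p1 q1 (1:S) + b • Matrix.single p1 q2 1
      + c • Matrix.single p2 q1 1
      + d • Matrix.single p2 q2 (1:S) : Matrix (Fin m) (Fin n) S) p q
      = B p 0 * C 0 q := by
    intro p q
    rw [hBC, Matrix.mul_apply, Fin.sum_univ_one]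
  have e11 : a = B p1 0 * C 0 q1 := by
    have := entry p1 q1
    simpa [Ne.symm hp, Ne.symm hq, hp, hq] using this
  have e12 : b = B p1 0 * C 0 q2 := by
    have := entry p1 q2
    simpa [Ne.symm hp, Ne.symm hq, hp, hq] using this
  have e21 : c = B p2 0 * C 0 q1 := by
    have := entry p2 q1
    simpa [Ne.symm hp, Ne.symm hq, hp, hq] using this
  have e22 : d = B p2 0 * C 0 q2 := by
    have := entry p2 q2
    simpa [Ne.symm hp, Ne.symm hq, hp, hq] using this
  rw [e11, e12, e21, e22]; ring

/-- The 4-corner all-ones matrix has rank 1 (when `S` is nontrivial). -/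
lemma matRank_four_corner [Nontrivial S] {i0 i : Fin m} {j0 j : Fin n}
    (hi : i0 ≠ i) (hj : j0 ≠ j) :
    matRank ((Matrix.single i0 j0 (1:S)) + Matrix.single i0 j 1
      + Matrix.single i j0 1 + Matrix.single i j 1) = 1 := by
  set A := (Matrix.single i0 j0 (1:S)) + Matrix.single i0 j 1
      + Matrix.single i j0 1 + Matrix.single i j 1 with hAdef
  have hA0 : A ≠ 0 := by
    intro hc
    have h2 : A i0 j0 = 0 := by rw [hc]; rfl
    rw [hAdef] at h2
    simp [Matrix.add_apply, hi, hj, Ne.symm hi, Ne.symm hj] at h2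
  have hfac : ∃ (B : Matrix (Fin m) (Fin 1) S) (C : Matrix (Fin 1) (Fin n) S), A = B * C := by
    refine ⟨Matrix.of fun p _ => if i0 = p ∨ i = p then 1 else 0,
      Matrix.of fun _ q => if j0 = q ∨ j = q then 1 else 0, ?_⟩
    ext p q
    rw [Matrix.mul_apply, Fin.sum_univ_one, hAdef]
    simp only [Matrix.add_apply, Matrix.single, Matrix.of_apply]
    by_cases hp1 : i0 = p <;> by_cases hp2 : i = p <;> by_cases hq1 : j0 = q <;>
      by_cases hq2 : j = q
    all_goals first
      | exact absurd (hp1.trans hp2.symm) hi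
      | exact absurd (hq1.trans hq2.symm) hj
      | simp [hp1, hp2, hq1, hq2]
  rw [matRank, if_neg hA0]
  apply le_antisymm
  · exact Nat.sInf_le ⟨one_pos, hfac⟩
  · have hne : {k : ℕ | 0 < k ∧
        ∃ (B : Matrix (Fin m) (Fin k) S) (C : Matrix (Fin k) (Fin n) S), A = B * C}.Nonempty :=
      ⟨1, one_pos, hfac⟩
    exact (Nat.sInf_mem hne).1

end rank

section entry
variable {S : Type*} [CommSemiring S] {m n : ℕ}

lemma TA_entry (T : Matrix (Fin m) (Fin n) S →ₗ[S] Matrix (Fin m) (Fin n) S)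
    (α : Fin m → Fin n → S) (P : Fin m × Fin n ≃ Fin m × Fin n)
    (hf : ∀ i j, T (Matrix.single i j 1)
      = α i j • Matrix.single (P (i,j)).1 (P (i,j)).2 1)
    (A : Matrix (Fin m) (Fin n) S) (p : Fin m) (q : Fin n) :
    T A p q = α (P.symm (p,q)).1 (P.symm (p,q)).2 * A (P.symm (p,q)).1 (P.symm (p,q)).2 := by
  have hTA : T A = ∑ x : Fin m × Fin n,
      (A x.1 x.2 * α x.1 x.2) • Matrix.single (P x).1 (P x).2 (1:S) := by
    conv_lhs => rw [Matrix.matrix_eq_sum_single A]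
    rw [Fintype.sum_prod_type]
    simp only [map_sum]
    refine Finset.sum_congr rfl fun i _ => Finset.sum_congr rfl fun j _ => ?_
    have h2 : Matrix.single i j (A i j) = A i j • Matrix.single i j (1:S) := by
      rw [Matrix.smul_single, smul_eq_mul, mul_one]
    rw [h2, LinearMap.map_smul, hf i j, smul_smul]
  rw [hTA, Matrix.sum_apply]
  rw [Finset.sum_eq_single (P.symm (p,q))]
  · simp [mul_comm]
  · intro b _ hb
    have hne : ¬((P b).1 = p ∧ (P b).2 = q) := by
      rintro ⟨h1', h2'⟩
      apply hb
      have hPb : P b = (p, q) := Prod.ext h1' h2'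
      rw [← hPb, Equiv.symm_apply_apply]
    simp [hne]
  · simp

end entry

theorem stmt11 {S : Type*} [CommSemiring S]
    (haddidem : ∀ a : S, a + a = a)
    (hmc : ∀ a b c : S, a ≠ 0 → b * a = c * a → b = c)
    (haui : ∀ a b : S, IsUnit (a + b) → IsUnit a ∨ IsUnit b)
    {m n : ℕ}
    (T : Matrix (Fin m) (Fin n) S →ₗ[S] Matrix (Fin m) (Fin n) S)
    (h1 : ∀ A : Matrix (Fin m) (Fin n) S, matRank A = 1 → matRank (T A) = 1)
    (ρ : Equiv.Perm (Fin m)) (σ : Equiv.Perm (Fin n)) (α : Fin m → Fin n → S)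
    (hα : ∀ i j, IsUnit (α i j))
    (hform : (∀ (i : Fin m) (j : Fin n),
        T (Matrix.single i j 1) = α i j • Matrix.single (ρ i) (σ j) 1) ∨
      (∃ h : m = n, ∀ (i : Fin m) (j : Fin n),
        T (Matrix.single i j 1) =
          α i j • Matrix.single (Fin.cast h.symm (σ j)) (Fin.cast h (ρ i)) 1)) :
    IsUVOperator T := by
  classical
  -- degenerate cases
  rcases subsingleton_or_nontrivial S with hS | hS
  · exact Or.inl ⟨1, 1, isUnit_one, isUnit_one, fun A => by
      ext p q; exact Subsingleton.elim _ _⟩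
  rcases Nat.eq_zero_or_pos m with hm | hm
  · exact Or.inl ⟨1, 1, isUnit_one, isUnit_one, fun A => by
      ext p q; exact absurd p.2 (by omega)⟩
  rcases Nat.eq_zero_or_pos n with hn | hn
  · exact Or.inl ⟨1, 1, isUnit_one, isUnit_one, fun A => by
      ext p q; exact absurd q.2 (by omega)⟩
  set i0 : Fin m := ⟨0, hm⟩ with hi0
  set j0 : Fin n := ⟨0, hn⟩ with hj0
  set a : Sˣ := (hα i0 j0).unit with ha
  have haval : (a : S) = α i0 j0 := (hα i0 j0).unit_spec
  set u : Fin m → S := fun i => α i j0 * (↑a⁻¹ : S) with hu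
  set v : Fin n → S := fun j => α i0 j with hv
  have hUu : ∀ i, IsUnit (u i) := fun i => (hα i j0).mul (Units.isUnit a⁻¹)
  have hUv : ∀ j, IsUnit (v j) := fun j => hα i0 j
  -- the multiplicative relation, given `hrel`
  have huv_of : (∀ (i : Fin m) (j : Fin n), α i0 j0 * α i j = α i j0 * α i0 j) →
      ∀ i j, u i * v j = α i j := by
    intro hrel i j
    have hrel' := (hrel i j).symm
    calc u i * v j = (α i j0 * α i0 j) * (↑a⁻¹ : S) := by rw [hu, hv]; ring
      _ = (α i0 j0 * α i j) * (↑a⁻¹ : S) := by rw [hrel']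
      _ = α i j * ((a : S) * (↑a⁻¹ : S)) := by rw [haval]; ring
      _ = α i j := by rw [Units.mul_inv, mul_one]
  obtain hf | ⟨h, hf⟩ := hform
  · -- non-transpose case
    have hrel : ∀ (i : Fin m) (j : Fin n), α i0 j0 * α i j = α i j0 * α i0 j := by
      intro i j
      by_cases hi : i0 = i
      · subst hi; ring
      by_cases hj : j0 = j
      · subst hj; ring
      have hrank := matRank_four_corner (S := S) hi hj
      have hTA : T (Matrix.single i0 j0 1 + Matrix.single i0 j 1
            + Matrix.single i j0 1 + Matrix.single i j 1)
          = α i0 j0 • Matrix.single (ρ i0) (σ j0) 1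
            + α i0 j • Matrix.single (ρ i0) (σ j) 1
            + α i j0 • Matrix.single (ρ i) (σ j0) 1
            + α i j • Matrix.single (ρ i) (σ j) 1 := by
        rw [map_add, map_add, map_add, hf, hf, hf, hf]
      have hr1 := h1 _ hrank
      rw [hTA] at hr1
      have hp : ρ i0 ≠ ρ i := fun hc => hi (ρ.injective hc)
      have hq : σ j0 ≠ σ j := fun hc => hj (σ.injective hc)
      exact (four_corner_rel hp hq hr1).trans (mul_comm _ _)
    have huv := huv_of hrel
    refine Or.inl ⟨pmMat ρ u, qmMat σ v, isUnit_pmMat ρ u hUu, isUnit_qmMat σ v hUv, fun A => ?_⟩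
    ext p q
    rw [triple_apply]
    have hP : ∀ i j, T (Matrix.single i j 1)
        = α i j • Matrix.single ((ρ.prodCongr σ) (i,j)).1 ((ρ.prodCongr σ) (i,j)).2 1 :=
      fun i j => hf i j
    rw [TA_entry T α (ρ.prodCongr σ) hP A p q]
    have hs : (ρ.prodCongr σ).symm (p, q) = (ρ.symm p, σ.symm q) := rfl
    rw [hs, ← huv (ρ.symm p) (σ.symm q)]
    ring
  · -- transpose case
    have hrel : ∀ (i : Fin m) (j : Fin n), α i0 j0 * α i j = α i j0 * α i0 j := by
      intro i j
      by_cases hi : i0 = i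
      · subst hi; ring
      by_cases hj : j0 = j
      · subst hj; ring
      have hrank := matRank_four_corner (S := S) hi hj
      have hTA : T (Matrix.single i0 j0 1 + Matrix.single i0 j 1
            + Matrix.single i j0 1 + Matrix.single i j 1)
          = α i0 j0 • Matrix.single (Fin.cast h.symm (σ j0)) (Fin.cast h (ρ i0)) 1
            + α i0 j • Matrix.single (Fin.cast h.symm (σ j)) (Fin.cast h (ρ i0)) 1
            + α i j0 • Matrix.single (Fin.cast h.symm (σ j0)) (Fin.cast h (ρ i)) 1
            + α i j • Matrix.single (Fin.cast h.symm (σ j)) (Fin.cast h (ρ i)) 1 := by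
        rw [map_add, map_add, map_add, hf, hf, hf, hf]
      have hr1 := h1 _ hrank
      rw [hTA] at hr1
      rw [add_right_comm (α i0 j0 • Matrix.single (Fin.cast h.symm (σ j0))
        (Fin.cast h (ρ i0)) 1)] at hr1
      have hp : Fin.cast h.symm (σ j0) ≠ Fin.cast h.symm (σ j) := by
        intro hc
        have hval := congrArg Fin.val hc
        simp only [Fin.coe_cast] at hval
        exact hj (σ.injective (Fin.ext hval))
      have hq : Fin.cast h (ρ i0) ≠ Fin.cast h (ρ i) := by
        intro hc
        have hval := congrArg Fin.val hc
        simp only [Fin.coe_cast] at hval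
        exact hi (ρ.injective (Fin.ext hval))
      exact four_corner_rel hp hq hr1
    have huv := huv_of hrel
    set e1 : Equiv.Perm (Fin m) := (finCongr h).trans (σ.trans (finCongr h.symm)) with he1
    set e2 : Equiv.Perm (Fin n) := (finCongr h.symm).trans (ρ.trans (finCongr h)) with he2
    set wU : Fin m → S := fun x => v (Fin.cast h x) with hwU
    set wV : Fin n → S := fun y => u (Fin.cast h.symm y) with hwV
    have hUwU : ∀ x, IsUnit (wU x) := fun x => hUv _
    have hUwV : ∀ y, IsUnit (wV y) := fun y => hUu _
    refine Or.inr ⟨h, pmMat e1 wU, qmMat e2 wV, isUnit_pmMat e1 wU hUwU,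
      isUnit_qmMat e2 wV hUwV, fun A => ?_⟩
    ext p q
    rw [triple_apply]
    set P : Fin m × Fin n ≃ Fin m × Fin n :=
      { toFun := fun x => (Fin.cast h.symm (σ x.2), Fin.cast h (ρ x.1))
        invFun := fun y => (ρ.symm (Fin.cast h.symm y.2), σ.symm (Fin.cast h y.1))
        left_inv := by
          rintro ⟨i, j⟩
          simp [Fin.ext_iff]
        right_inv := by
          rintro ⟨p, q⟩
          simp [Fin.ext_iff] } with hPdef
    have hP : ∀ i j, T (Matrix.single i j 1)
        = α i j • Matrix.single (P (i,j)).1 (P (i,j)).2 1 := fun i j => hf i j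
    rw [TA_entry T α P hP A p q]
    have hs : P.symm (p, q) = (ρ.symm (Fin.cast h.symm q), σ.symm (Fin.cast h p)) := rfl
    rw [hs]
    set i' : Fin m := ρ.symm (Fin.cast h.symm q) with hi'
    set j' : Fin n := σ.symm (Fin.cast h p) with hj'
    have hse1 : e1.symm p = Fin.cast h.symm j' := rfl
    have hse2 : e2.symm q = Fin.cast h i' := rfl
    rw [hse1, hse2]
    have h3 : wU (Fin.cast h.symm j') = v j' := by
      rw [hwU]; congr 1
    have h4 : wV (Fin.cast h i') = u i' := by
      rw [hwV]; congr 1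
    have h5 : trCast h A (Fin.cast h.symm j') (Fin.cast h i') = A i' j' := by
      show A (Fin.cast h.symm (Fin.cast h i')) (Fin.cast h (Fin.cast h.symm j')) = A i' j'
      congr 1 <;> exact Fin.ext rfl
    rw [h3, h4, h5, ← huv i' j']
    ring
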